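/- Let f : [0,1] → [0,1] be continuous, let k ≥ 1, and assume that Per(f,k) is a Cantor set. Fix x ∈ Per(f,k) and ε > 0, and let μ_x = (1/k)·∑_{i=0}^{k-1} δ_{f^i(x)} be the unique f-invariant Borel probability measure supported on the orbit of x. Then there exists a non-atomic f-invariant Borel probability measure ν whose support is contained in Per(f,k) such that the Lévy–Prokhorov distance D(μ_x, ν) < ε. -/

import Mathlib

open MeasureTheory Set Metric Filter Topology

noncomputable section

/-- Lebesgue measure on the unit interval `[0,1]`, viewed as a measure on the subtype. -/
def lebI : Measure unitInterval := (volume : Measure ℝ).comap Subtype.val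

/-- A continuous self-map of `[0,1]` preserves Lebesgue measure. -/
def MeasPres (f : C(unitInterval, unitInterval)) : Prop :=
  ∀ A : Set unitInterval, MeasurableSet A → lebI (f ⁻¹' A) = lebI A

/-- The space `C_λ(I)` of continuous Lebesgue-measure-preserving maps of `[0,1]`. -/
def CLam : Set C(unitInterval, unitInterval) := {f | MeasPres f}

/-- `Fix(f,k) = {x : f^k x = x}`. -/
def FixSet {X : Type*} (f : X → X) (k : ℕ) : Set X := {x | f^[k] x = x}

/-- `Per(f,k) = {x : f^k x = x and f^i x ≠ x for 1 ≤ i < k}`. -/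
def PerSet {X : Type*} (f : X → X) (k : ℕ) : Set X :=
  {x | f^[k] x = x ∧ ∀ i : ℕ, 1 ≤ i → i < k → f^[i] x ≠ x}

/-- `Per(f) = ⋃_{k ≥ 1} Fix(f,k)`, the set of all periodic points. -/
def PerAll {X : Type*} (f : X → X) : Set X := ⋃ k ∈ {k : ℕ | 1 ≤ k}, FixSet f k

/-- A Cantor set: nonempty, compact, perfect and totally disconnected. -/
def IsCantorSet {X : Type*} [TopologicalSpace X] (C : Set X) : Prop :=
  C.Nonempty ∧ IsCompact C ∧ Perfect C ∧ IsTotallyDisconnected C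

/-- The Lévy–Prokhorov distance between two Borel measures on `[0,1]`:
`D(μ,ν) = inf {ε > 0 : μ A ≤ ν (B(A,ε)) + ε and ν A ≤ μ (B(A,ε)) + ε for all Borel A}`. -/
def prokhorovDist (μ ν : Measure unitInterval) : ℝ :=
  sInf {ε : ℝ | 0 < ε ∧ ∀ A : Set unitInterval, MeasurableSet A →
      μ A ≤ ν (Metric.thickening ε A) + ENNReal.ofReal ε ∧
      ν A ≤ μ (Metric.thickening ε A) + ENNReal.ofReal ε}

/-- `μ_x = (1/k) ∑_{i<k} δ_{f^i(x)}`: the CO-measure on the orbit of `x ∈ Per(f,k)`. -/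
def orbitMeasure (f : unitInterval → unitInterval) (k : ℕ) (x : unitInterval) :
    Measure unitInterval :=
  (k : ENNReal)⁻¹ • ∑ i ∈ Finset.range k, Measure.dirac (f^[i] x)

/-- binary digit map into Cantor space -/
def binDig (t : ℝ) : ℕ → Bool := fun n => decide (⌊t * 2 ^ (n + 1)⌋ % 2 = 1)

lemma floor_two_mul_eq (u : ℝ) : ⌊2 * u⌋ = 2 * ⌊u⌋ + ⌊2 * u⌋ % 2 := by
  have h1 : 2 * ⌊u⌋ ≤ ⌊2 * u⌋ := by
    rw [Int.le_floor]; push_cast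
    nlinarith [Int.floor_le u]
  have h2 : ⌊2 * u⌋ < 2 * ⌊u⌋ + 2 := by
    rw [Int.floor_lt]; push_cast
    nlinarith [Int.lt_floor_add_one u]
  omega

lemma binDig_injOn : InjOn binDig (Ico (0:ℝ) 1) := by
  intro s hs t ht h
  have hd : ∀ n : ℕ, ⌊s * 2 ^ (n+1)⌋ % 2 = ⌊t * 2 ^ (n+1)⌋ % 2 := by
    intro n
    have := congrFun h n
    simp only [binDig, decide_eq_decide] at this
    have h1 : ⌊s * 2 ^ (n+1)⌋ % 2 = 0 ∨ ⌊s * 2 ^ (n+1)⌋ % 2 = 1 := by omega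
    have h2 : ⌊t * 2 ^ (n+1)⌋ % 2 = 0 ∨ ⌊t * 2 ^ (n+1)⌋ % 2 = 1 := by omega
    omega
  have hfl : ∀ n : ℕ, ⌊s * 2 ^ n⌋ = ⌊t * 2 ^ n⌋ := by
    intro n
    induction n with
    | zero =>
      simp only [pow_zero, mul_one]
      rw [Int.floor_eq_zero_iff.2 hs, Int.floor_eq_zero_iff.2 ht]
    | succ n ih =>
      have es : s * 2 ^ (n+1) = 2 * (s * 2 ^ n) := by ring
      have et : t * 2 ^ (n+1) = 2 * (t * 2 ^ n) := by ring
      have := hd n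
      rw [es, et] at this ⊢
      rw [floor_two_mul_eq (s * 2 ^ n), floor_two_mul_eq (t * 2 ^ n), ih, this]
  by_contra hne
  have habs : ∀ n : ℕ, |s - t| < ((1:ℝ)/2) ^ n := by
    intro n
    have h1 : |s * 2 ^ n - t * 2 ^ n| < 1 := Int.abs_sub_lt_one_of_floor_eq_floor (hfl n)
    have h2 : |s - t| * 2 ^ n < 1 := by
      have : s * 2 ^ n - t * 2 ^ n = (s - t) * 2 ^ n := by ring
      rw [this, abs_mul, abs_of_pos (by positivity : (0:ℝ) < (2:ℝ) ^ n)] at h1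
      exact h1
    rw [div_pow, one_pow, lt_div_iff₀ (by positivity)]
    linarith
  have hpos : 0 < |s - t| := abs_pos.2 (sub_ne_zero.2 hne)
  obtain ⟨n, hn⟩ := exists_pow_lt_of_lt_one hpos (by norm_num : (1:ℝ)/2 < 1)
  exact absurd (habs n) (not_lt.2 hn.le)

lemma binDig_measurable : Measurable binDig := by
  apply measurable_pi_lambda
  intro n
  have h1 : Measurable fun t : ℝ => ⌊t * 2 ^ (n + 1)⌋ :=
    Int.measurable_floor.comp (by fun_prop)
  exact (measurable_from_top (f := fun m : ℤ => decide (m % 2 = 1))).comp h1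

/-- The Cantor coin-flip measure. -/
def cantorMeasure : Measure (ℕ → Bool) :=
  Measure.map binDig ((volume : Measure ℝ).restrict (Ico 0 1))

lemma cantorMeasure_univ : cantorMeasure univ = 1 := by
  rw [cantorMeasure, Measure.map_apply binDig_measurable MeasurableSet.univ]
  simp [Real.volume_Ico]

lemma cantorMeasure_singleton (b : ℕ → Bool) : cantorMeasure {b} = 0 := by
  rw [cantorMeasure, Measure.map_apply binDig_measurable (measurableSet_singleton b),
    Measure.restrict_apply (binDig_measurable (measurableSet_singleton b))]
  have hsub : (binDig ⁻¹' {b} ∩ Ico (0:ℝ) 1).Subsingleton := by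
    intro u hu v hv
    exact binDig_injOn hu.2 hv.2 (hu.1.trans hv.1.symm)
  rcases (binDig ⁻¹' {b} ∩ Ico (0:ℝ) 1).eq_empty_or_nonempty with h | ⟨z, hz⟩
  · simp [h]
  · refine le_antisymm ?_ zero_le
    calc volume (binDig ⁻¹' {b} ∩ Ico (0:ℝ) 1) ≤ volume {z} :=
          measure_mono (fun w hw => hsub hw hz)
      _ = 0 := Real.volume_singleton

lemma perSet_mapsTo {X : Type*} (f : X → X) (k : ℕ) (hk : 1 ≤ k) :
    Set.MapsTo f (PerSet f k) (PerSet f k) := by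
  intro z hz
  obtain ⟨hzk, hzmin⟩ := hz
  constructor
  · show f^[k] (f z) = f z
    rw [← Function.iterate_succ_apply, Function.iterate_succ_apply', hzk]
  · intro i hi1 hik hcon
    apply hzmin i hi1 hik
    have h1 : f^[k-1] (f^[i] (f z)) = f^[k-1] (f z) := congrArg _ hcon
    have h2 : f^[k-1] (f^[i] (f z)) = f^[i] (f^[k] z) := by
      rw [← Function.iterate_succ_apply, ← Function.iterate_add_apply,
        ← Function.iterate_add_apply]
      congr 1
      omega
    have hkk : k - 1 + 1 = k := Nat.sub_add_cancel hk
    have h3 : f^[k-1] (f z) = f^[k] z :=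
      (Function.iterate_succ_apply f (k-1) z).symm.trans (by rw [Nat.succ_eq_add_one, hkk])
    rw [h2, h3, hzk] at h1
    exact h1

lemma perSet_iterate_mapsTo {X : Type*} (f : X → X) (k : ℕ) (hk : 1 ≤ k) (i : ℕ) :
    Set.MapsTo f^[i] (PerSet f k) (PerSet f k) := by
  induction i with
  | zero => simpa using Set.mapsTo_id _
  | succ i ih =>
    rw [Function.iterate_succ']
    exact (perSet_mapsTo f k hk).comp ih

lemma fixSet_iterate_injOn {X : Type*} (f : X → X) (k : ℕ) (hk : 1 ≤ k) (i : ℕ) :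
    Set.InjOn f^[i] (FixSet f k) := by
  intro z hz w hw h
  have key : ∀ u : X, u ∈ FixSet f k → f^[k * (i+1) - i] (f^[i] u) = u := by
    intro u hu
    rw [← Function.iterate_add_apply]
    have he : k * (i+1) - i + i = k * (i+1) := by
      have : i + 1 ≤ k * (i + 1) := Nat.le_mul_of_pos_left _ hk
      omega
    rw [he, Function.iterate_mul]
    exact Function.iterate_fixed hu (i+1)
  rw [← key z hz, ← key w hw, h]

/-- Lemma 5: if `Per(f,k)` is a Cantor set, the CO-measure of any `x ∈ Per(f,k)` can be
approximated in the Prokhorov metric by a non-atomic invariant measure supported on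
`Per(f,k)` (for a closed set, having support inside it means it carries full measure). -/
theorem orbitMeasure_approx_nonatomic (f : unitInterval → unitInterval) (hf : Continuous f)
    (k : ℕ) (hk : 1 ≤ k) (hCantor : IsCantorSet (PerSet f k))
    (x : unitInterval) (hx : x ∈ PerSet f k) (ε : ℝ) (hε : 0 < ε) :
    ∃ ν : Measure unitInterval, IsProbabilityMeasure ν ∧
      (∀ y : unitInterval, ν {y} = 0) ∧
      (∀ A : Set unitInterval, MeasurableSet A → ν (f ⁻¹' A) = ν A) ∧
      ν (PerSet f k) = 1 ∧
      prokhorovDist (orbitMeasure f k x) ν < ε := by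
  obtain ⟨hne, hcomp, hperf, htd⟩ := hCantor
  have hPerClosed : IsClosed (PerSet f k) := hcomp.isClosed
  have hPerMeas : MeasurableSet (PerSet f k) := hPerClosed.measurableSet
  -- uniform control of the first k iterates near x
  set G : unitInterval → (Fin k → unitInterval) := fun z i => f^[(i : ℕ)] z with hG
  have hGcont : Continuous G := continuous_pi fun i => hf.iterate _
  obtain ⟨δ, hδpos, hδ⟩ := Metric.continuousAt_iff.1 hGcont.continuousAt (ε/2) (half_pos hε)
  -- the perfect set K near x
  set K : Set unitInterval := closure (ball x (δ/2) ∩ PerSet f k) with hKdef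
  obtain ⟨hKperf, hKne⟩ := hperf.closure_nhds_inter x hx
    (mem_ball_self (half_pos hδpos)) isOpen_ball
  have hKsub : K ⊆ PerSet f k :=
    closure_minimal inter_subset_right hPerClosed
  have hKball : K ⊆ closedBall x (δ/2) :=
    closure_minimal (fun z hz => ball_subset_closedBall hz.1) isClosed_closedBall
  have hKclosed : IsClosed K := isClosed_closure
  have hKmeas : MeasurableSet K := hKclosed.measurableSet
  -- key estimate: z ∈ K → dist (f^[i] z) (f^[i] x) < ε/2  for i < k
  have hKiter : ∀ z ∈ K, ∀ i < k, dist (f^[i] z) (f^[i] x) < ε/2 := by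
    intro z hz i hi
    have hdz : dist z x < δ := lt_of_le_of_lt (hKball hz) (by linarith)
    have := hδ hdz
    calc dist (f^[i] z) (f^[i] x) = dist (G z ⟨i, hi⟩) (G x ⟨i, hi⟩) := rfl
      _ ≤ dist (G z) (G x) := dist_le_pi_dist _ _ _
      _ < ε/2 := this
  -- atomless probability measure on K
  obtain ⟨F, hFrange, hFcont, hFinj⟩ := hKperf.exists_nat_bool_injection hKne
  set lam : Measure unitInterval := Measure.map F cantorMeasure with hlam
  have hFmeas : Measurable F := hFcont.measurable
  have hlam_univ : lam univ = 1 := by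
    rw [hlam, Measure.map_apply hFmeas MeasurableSet.univ, preimage_univ, cantorMeasure_univ]
  have hlamK : lam K = 1 := by
    rw [hlam, Measure.map_apply hFmeas hKmeas]
    have : F ⁻¹' K = univ := eq_univ_of_forall fun b => hFrange (mem_range_self b)
    rw [this, cantorMeasure_univ]
  have hlamKc : lam Kᶜ = 0 := by
    have := measure_compl hKmeas (by rw [hlamK]; exact ENNReal.one_ne_top)
    rw [hlamK, hlam_univ] at this
    simpa using this
  have hlam_inter : ∀ B : Set unitInterval, lam (B ∩ K) = lam B :=
    fun B => measure_inter_conull hlamKc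
  have hlam_atom : ∀ y : unitInterval, lam {y} = 0 := by
    intro y
    rw [hlam, Measure.map_apply hFmeas (measurableSet_singleton y)]
    rcases (F ⁻¹' {y}).eq_empty_or_nonempty with h | ⟨b, hb⟩
    · simp [h]
    · refine le_antisymm ?_ zero_le
      calc cantorMeasure (F ⁻¹' {y}) ≤ cantorMeasure {b} :=
            measure_mono (fun c hc => hFinj (hc.trans hb.symm))
        _ = 0 := cantorMeasure_singleton b
  -- measure of subsingleton-mod-K sets vanishes
  have hlam_small : ∀ S : Set unitInterval, (S ∩ K).Subsingleton → lam S = 0 := by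
    intro S hS
    rw [← hlam_inter S]
    rcases (S ∩ K).eq_empty_or_nonempty with h | ⟨z, hz⟩
    · simp [h]
    · refine le_antisymm ?_ zero_le
      calc lam (S ∩ K) ≤ lam {z} := measure_mono (fun w hw => hS hw hz)
        _ = 0 := hlam_atom z
  -- the candidate measure
  have hiter_meas : ∀ i : ℕ, Measurable (f^[i]) := fun i => (hf.iterate i).measurable
  set ν : Measure unitInterval :=
    (k : ENNReal)⁻¹ • ∑ i ∈ Finset.range k, Measure.map f^[i] lam with hν
  have hν_apply : ∀ B : Set unitInterval, MeasurableSet B →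
      ν B = (k : ENNReal)⁻¹ * ∑ i ∈ Finset.range k, lam (f^[i] ⁻¹' B) := by
    intro B hB
    rw [hν, Measure.smul_apply, smul_eq_mul, Measure.finset_sum_apply]
    congr 1
    exact Finset.sum_congr rfl fun i _ => Measure.map_apply (hiter_meas i) hB
  have hkE : (k : ENNReal) ≠ 0 := Nat.cast_ne_zero.2 (by omega)
  have hkT : (k : ENNReal) ≠ ⊤ := ENNReal.natCast_ne_top k
  have hνuniv : ν univ = 1 := by
    rw [hν_apply univ MeasurableSet.univ]
    simp only [preimage_univ, hlam_univ, Finset.sum_const, Finset.card_range, nsmul_eq_mul,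
      mul_one]
    exact ENNReal.inv_mul_cancel hkE hkT
  have hνprob : IsProbabilityMeasure ν := ⟨hνuniv⟩
  refine ⟨ν, hνprob, ?_, ?_, ?_, ?_⟩
  · -- atomless
    intro y
    rw [hν_apply {y} (measurableSet_singleton y)]
    have : ∀ i ∈ Finset.range k, lam (f^[i] ⁻¹' {y}) = 0 := by
      intro i _
      apply hlam_small
      intro z hz w hw
      exact fixSet_iterate_injOn f k hk i (hKsub hz.2).1 (hKsub hw.2).1
        (hz.1.trans hw.1.symm)
    rw [Finset.sum_congr rfl this]
    simp
  · -- invariance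
    intro A hA
    rw [hν_apply (f ⁻¹' A) (hf.measurable hA), hν_apply A hA]
    congr 1
    set a : ℕ → ENNReal := fun i => lam (f^[i] ⁻¹' A) with ha
    have hshift : ∀ i : ℕ, lam (f^[i] ⁻¹' (f ⁻¹' A)) = a (i+1) := by
      intro i
      rw [ha]
      congr 1
      rw [← preimage_comp, ← Function.iterate_succ']
    have hak : a k = a 0 := by
      rw [ha]
      simp only [Function.iterate_zero, preimage_id]
      rw [← hlam_inter (f^[k] ⁻¹' A), ← hlam_inter A]
      congr 1
      ext z
      constructor
      · rintro ⟨hzA, hzK⟩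
        refine ⟨?_, hzK⟩
        have : f^[k] z = z := (hKsub hzK).1
        rwa [mem_preimage, this] at hzA
      · rintro ⟨hzA, hzK⟩
        refine ⟨?_, hzK⟩
        have : f^[k] z = z := (hKsub hzK).1
        rwa [mem_preimage, this]
    have hsum : ∑ i ∈ Finset.range k, a (i+1) + a 0 = ∑ i ∈ Finset.range k, a i + a 0 := by
      rw [← Finset.sum_range_succ' a k, Finset.sum_range_succ a k, hak]
    have ha0top : a 0 ≠ ⊤ := by
      have : a 0 ≤ lam univ := measure_mono (subset_univ _)
      rw [hlam_univ] at this
      exact (this.trans_lt ENNReal.one_lt_top).ne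
    have := WithTop.add_right_cancel ha0top hsum
    calc ∑ i ∈ Finset.range k, lam (f^[i] ⁻¹' (f ⁻¹' A))
        = ∑ i ∈ Finset.range k, a (i+1) := Finset.sum_congr rfl fun i _ => hshift i
      _ = ∑ i ∈ Finset.range k, a i := this
  · -- supported on PerSet
    rw [hν_apply _ hPerMeas]
    have : ∀ i ∈ Finset.range k, lam (f^[i] ⁻¹' PerSet f k) = 1 := by
      intro i _
      refine le_antisymm (by rw [← hlam_univ]; exact measure_mono (subset_univ _)) ?_
      rw [← hlamK]
      apply measure_mono
      intro z hz
      exact (perSet_iterate_mapsTo f k hk i) (hKsub hz)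
    rw [Finset.sum_congr rfl this]
    simp only [Finset.sum_const, Finset.card_range, nsmul_eq_mul, mul_one]
    exact ENNReal.inv_mul_cancel hkE hkT
  · -- Prokhorov distance
    have horb_apply : ∀ B : Set unitInterval,
        orbitMeasure f k x B =
          (k : ENNReal)⁻¹ * ∑ i ∈ Finset.range k, Measure.dirac (f^[i] x) B := by
      intro B
      rw [orbitMeasure, Measure.smul_apply, smul_eq_mul, Measure.finset_sum_apply]
    have hmem : ε/2 ∈ {ε' : ℝ | 0 < ε' ∧ ∀ A : Set unitInterval, MeasurableSet A →
        orbitMeasure f k x A ≤ ν (Metric.thickening ε' A) + ENNReal.ofReal ε' ∧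
        ν A ≤ orbitMeasure f k x (Metric.thickening ε' A) + ENNReal.ofReal ε'} := by
      refine ⟨half_pos hε, fun A hA => ⟨?_, ?_⟩⟩
      · -- orbit ≤ ν(thickening) + ε/2
        have hthick : MeasurableSet (Metric.thickening (ε/2) A) :=
          Metric.isOpen_thickening.measurableSet
        have hterm : ∀ i ∈ Finset.range k,
            Measure.dirac (f^[i] x) A ≤ lam (f^[i] ⁻¹' Metric.thickening (ε/2) A) := by
          intro i hi
          rw [Finset.mem_range] at hi
          by_cases hxA : f^[i] x ∈ A
          · have hsub : K ⊆ f^[i] ⁻¹' Metric.thickening (ε/2) A := by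
              intro z hz
              rw [mem_preimage, Metric.mem_thickening_iff]
              exact ⟨f^[i] x, hxA, hKiter z hz i hi⟩
            calc Measure.dirac (f^[i] x) A ≤ 1 := prob_le_one
              _ = lam K := hlamK.symm
              _ ≤ lam (f^[i] ⁻¹' Metric.thickening (ε/2) A) := measure_mono hsub
          · rw [Measure.dirac_apply' _ hA, indicator_of_notMem hxA]
            exact zero_le
        calc orbitMeasure f k x A
            = (k : ENNReal)⁻¹ * ∑ i ∈ Finset.range k, Measure.dirac (f^[i] x) A :=
              horb_apply A
          _ ≤ (k : ENNReal)⁻¹ * ∑ i ∈ Finset.range k,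
              lam (f^[i] ⁻¹' Metric.thickening (ε/2) A) :=
              mul_le_mul_right (Finset.sum_le_sum hterm) _
          _ = ν (Metric.thickening (ε/2) A) := (hν_apply _ hthick).symm
          _ ≤ _ := le_self_add
      · -- ν ≤ orbit(thickening) + ε/2
        have hthick : MeasurableSet (Metric.thickening (ε/2) A) :=
          Metric.isOpen_thickening.measurableSet
        have hterm : ∀ i ∈ Finset.range k,
            lam (f^[i] ⁻¹' A) ≤ Measure.dirac (f^[i] x) (Metric.thickening (ε/2) A) := by
          intro i hi
          rw [Finset.mem_range] at hi
          rcases (f^[i] ⁻¹' A ∩ K).eq_empty_or_nonempty with hemp | ⟨z, hzA, hzK⟩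
          · rw [← hlam_inter (f^[i] ⁻¹' A), hemp]
            simp
          · have hxT : f^[i] x ∈ Metric.thickening (ε/2) A := by
              rw [Metric.mem_thickening_iff]
              refine ⟨f^[i] z, hzA, ?_⟩
              rw [dist_comm]
              exact hKiter z hzK i hi
            rw [Measure.dirac_apply' _ hthick, indicator_of_mem hxT]
            calc lam (f^[i] ⁻¹' A) ≤ lam univ := measure_mono (subset_univ _)
              _ = 1 := hlam_univ
              _ = _ := rfl
        calc ν A = (k : ENNReal)⁻¹ * ∑ i ∈ Finset.range k, lam (f^[i] ⁻¹' A) :=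
              hν_apply A hA
          _ ≤ (k : ENNReal)⁻¹ * ∑ i ∈ Finset.range k,
              Measure.dirac (f^[i] x) (Metric.thickening (ε/2) A) :=
              mul_le_mul_right (Finset.sum_le_sum hterm) _
          _ = orbitMeasure f k x (Metric.thickening (ε/2) A) := (horb_apply _).symm
          _ ≤ _ := le_self_add
    have hbdd : BddBelow {ε' : ℝ | 0 < ε' ∧ ∀ A : Set unitInterval, MeasurableSet A →
        orbitMeasure f k x A ≤ ν (Metric.thickening ε' A) + ENNReal.ofReal ε' ∧
        ν A ≤ orbitMeasure f k x (Metric.thickening ε' A) + ENNReal.ofReal ε'} :=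
      ⟨0, fun y hy => hy.1.le⟩
    calc prokhorovDist (orbitMeasure f k x) ν ≤ ε/2 := csInf_le hbdd hmem
      _ < ε := half_lt_self hε
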